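/- arXiv:math/0410610 — 4 statements merged into one kernel-verified Lean document; each statement's English description precedes it below -/
import Mathlib

section
/- On ℝ⁶ with the standard SU(3)-structure forms, let u(3)^⊥ denote the space of alternating 2-forms β on ℝ⁶ satisfying β(Ix, Iy) = −β(x, y) for all x, y. Then the linear maps Ξ₊ and Ξ₋ from alternating 2-forms to alternating 3-forms defined by Ξ₊(β) = (1/2) Σ_{i=1}^{6} (e_i ⌟ β) ∧ (e_i ⌟ ψ₋) and Ξ₋(β) = −(1/2) Σ_{i=1}^{6} (e_i ⌟ β) ∧ (e_i ⌟ ψ₊) are both injective when restricted to u(3)^⊥, and the image of u(3)^⊥ under each of Ξ₊ and Ξ₋ equals the subspace {μ ∧ ω : μ an ℝ-linear 1-form on ℝ⁶} of alternating 3-forms. -/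
open scoped BigOperators
set_option maxHeartbeats 1600000

noncomputable section

/-- ℝ⁶ as the space of functions `Fin 6 → ℝ`. -/
abbrev V6 : Type := Fin 6 → ℝ

/-- The standard inner product on ℝ⁶. -/
def ip6 (x y : V6) : ℝ := ∑ i, x i * y i

/-- The standard orthonormal basis vector `e_i`. -/
def e6 (i : Fin 6) : V6 := fun j => if j = i then 1 else 0

/-- The orthogonal complex structure: `I e_k = e_{k+3}`, `I e_{k+3} = -e_k` (0-indexed). -/
def I6 (x : V6) : V6 := fun j => if (j : ℕ) < 3 then -x (j + 3) else x (j + 3)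

/-- The Kähler form `ω(x,y) = ⟨x, I y⟩`. -/
def ω6 (x y : V6) : ℝ := ip6 x (I6 y)

/-- The basis covector `eⁱ`. -/
def E (i : Fin 6) : V6 → ℝ := fun x => x i

/-- Wedge product of three covectors (determinant convention). -/
def w3 (a b c : V6 → ℝ) (x y z : V6) : ℝ :=
  a x * b y * c z - a x * b z * c y - a y * b x * c z
    + a y * b z * c x + a z * b x * c y - a z * b y * c x

/-- `ψ₊ = e¹∧e²∧e³ − e⁴∧e⁵∧e³ − e⁴∧e²∧e⁶ − e¹∧e⁵∧e⁶` (0-indexed). -/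
def ψp (x y z : V6) : ℝ :=
  w3 (E 0) (E 1) (E 2) x y z - w3 (E 3) (E 4) (E 2) x y z
    - w3 (E 3) (E 1) (E 5) x y z - w3 (E 0) (E 4) (E 5) x y z

/-- `ψ₋ = −e⁴∧e⁵∧e⁶ + e⁴∧e²∧e³ + e¹∧e⁵∧e³ + e¹∧e²∧e⁶` (0-indexed). -/
def ψm (x y z : V6) : ℝ :=
  -w3 (E 3) (E 4) (E 5) x y z + w3 (E 3) (E 1) (E 2) x y z
    + w3 (E 0) (E 4) (E 2) x y z + w3 (E 0) (E 1) (E 5) x y z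

/-- `u(3)^⊥`: alternating 2-forms `β` with `β(Ix,Iy) = −β(x,y)`. -/
def u3perp : Set (AlternatingMap ℝ V6 ℝ (Fin 2)) :=
  {β | ∀ x y : V6, β ![I6 x, I6 y] = -β ![x, y]}

/-- `Ξ₊(β) = (1/2) ∑ᵢ (eᵢ ⌟ β) ∧ (eᵢ ⌟ ψ₋)`. -/
def Ξp (β : AlternatingMap ℝ V6 ℝ (Fin 2)) : V6 → V6 → V6 → ℝ :=
  fun x y z => (1 / 2 : ℝ) * ∑ i : Fin 6,
    (β ![e6 i, x] * ψm (e6 i) y z - β ![e6 i, y] * ψm (e6 i) x z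
      + β ![e6 i, z] * ψm (e6 i) x y)

/-- `Ξ₋(β) = −(1/2) ∑ᵢ (eᵢ ⌟ β) ∧ (eᵢ ⌟ ψ₊)`. -/
def Ξm (β : AlternatingMap ℝ V6 ℝ (Fin 2)) : V6 → V6 → V6 → ℝ :=
  fun x y z => -(1 / 2 : ℝ) * ∑ i : Fin 6,
    (β ![e6 i, x] * ψp (e6 i) y z - β ![e6 i, y] * ψp (e6 i) x z
      + β ![e6 i, z] * ψp (e6 i) x y)

/-- The space `{μ ∧ ω : μ a 1-form}` of 3-forms, where
`(μ ∧ ω)(x,y,z) = μ(x)ω(y,z) − μ(y)ω(x,z) + μ(z)ω(x,y)`. -/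
def oneFormWedgeOmega : Set (V6 → V6 → V6 → ℝ) :=
  {γ | ∃ μ : V6 →ₗ[ℝ] ℝ,
    γ = fun x y z => μ x * ω6 y z - μ y * ω6 x z + μ z * ω6 x y}


/- ===== auxiliary machinery ===== -/

lemma I6_e0 : I6 (e6 0) = e6 3 := by funext j; fin_cases j <;> simp [I6, e6]
lemma I6_e1 : I6 (e6 1) = e6 4 := by funext j; fin_cases j <;> simp [I6, e6]
lemma I6_e2 : I6 (e6 2) = e6 5 := by funext j; fin_cases j <;> simp [I6, e6]
lemma I6_e3 : I6 (e6 3) = -e6 0 := by funext j; fin_cases j <;> simp [I6, e6]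
lemma I6_e4 : I6 (e6 4) = -e6 1 := by funext j; fin_cases j <;> simp [I6, e6]
lemma I6_e5 : I6 (e6 5) = -e6 2 := by funext j; fin_cases j <;> simp [I6, e6]

lemma I6_app0 (x : V6) : I6 x 0 = -x 3 := rfl
lemma I6_app1 (x : V6) : I6 x 1 = -x 4 := rfl
lemma I6_app2 (x : V6) : I6 x 2 = -x 5 := rfl
lemma I6_app3 (x : V6) : I6 x 3 = x 0 := rfl
lemma I6_app4 (x : V6) : I6 x 4 = x 1 := rfl
lemma I6_app5 (x : V6) : I6 x 5 = x 2 := rfl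

lemma omega_expand (y z : V6) : ω6 y z =
    -(y 0 * z 3) - y 1 * z 4 - y 2 * z 5 + y 3 * z 0 + y 4 * z 1 + y 5 * z 2 := by
  simp only [ω6, ip6, Fin.sum_univ_six, I6_app0, I6_app1, I6_app2, I6_app3, I6_app4, I6_app5]
  ring

lemma hswap (β : AlternatingMap ℝ V6 ℝ (Fin 2)) (u w : V6) : β ![w, u] = -β ![u, w] := by
  have h := β.map_swap ![u, w] (Fin.zero_ne_one)
  rw [← h]; congr 1; funext k; fin_cases k <;> rfl

lemma negR (β : AlternatingMap ℝ V6 ℝ (Fin 2)) (u w : V6) : β ![u, -w] = -β ![u, w] := by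
  have h1 : (![u, -w] : Fin 2 → V6) = Function.update ![u, w] 1 (-w) := by
    funext k; fin_cases k <;> simp
  have h2 : (![u, w] : Fin 2 → V6) = Function.update ![u, w] 1 w := by
    funext k; fin_cases k <;> simp
  rw [h1, show (-w) = (-1 : ℝ) • w by funext k; simp, β.map_update_smul]
  rw [← h2]; simp

lemma basis_expand (v : V6) : v = ∑ i, v i • e6 i := by
  funext j; simp [e6, Finset.sum_apply]

lemma linmap_expand (μ : V6 →ₗ[ℝ] ℝ) (v : V6) : μ v = ∑ k, v k * μ (e6 k) := by
  conv_lhs => rw [basis_expand v]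
  rw [map_sum]
  exact Finset.sum_congr rfl fun k _ => by rw [map_smul, smul_eq_mul]

lemma expand2 (β : AlternatingMap ℝ V6 ℝ (Fin 2)) (x y : V6) :
    β ![x, y] = ∑ i, ∑ j, x i * y j * β ![e6 i, e6 j] := by
  have h1 : ∀ w : V6, β ![x, w] = ∑ i, x i * β ![e6 i, w] := by
    intro w
    have key : ∀ u : V6, β ![u, w] = β (Function.update ![(0:V6), w] 0 u) := by
      intro u; congr 1; funext k; fin_cases k <;> simp
    rw [key x]
    conv_lhs => rw [basis_expand x]
    rw [β.map_update_sum]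
    refine Finset.sum_congr rfl fun i _ => ?_
    rw [β.map_update_smul, ← key (e6 i)]; simp
  rw [h1 y]
  refine Finset.sum_congr rfl fun i _ => ?_
  have h2 : β ![e6 i, y] = ∑ j, y j * β ![e6 i, e6 j] := by
    have key : ∀ u : V6, β ![e6 i, u] = β (Function.update ![e6 i, (0:V6)] 1 u) := by
      intro u; congr 1; funext k; fin_cases k <;> simp
    rw [key y]
    conv_lhs => rw [basis_expand y]
    rw [β.map_update_sum]
    refine Finset.sum_congr rfl fun j _ => ?_
    rw [β.map_update_smul, ← key (e6 j)]; simp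
  rw [h2, Finset.mul_sum]
  exact Finset.sum_congr rfl fun j _ => by ring

lemma u3perp_expand (β : AlternatingMap ℝ V6 ℝ (Fin 2)) (hβ : β ∈ u3perp) (x y : V6) :
    β ![x, y] =
      β ![e6 0, e6 1] * (x 0 * y 1 - x 1 * y 0 - x 3 * y 4 + x 4 * y 3)
    + β ![e6 0, e6 2] * (x 0 * y 2 - x 2 * y 0 - x 3 * y 5 + x 5 * y 3)
    + β ![e6 1, e6 2] * (x 1 * y 2 - x 2 * y 1 - x 4 * y 5 + x 5 * y 4)
    + β ![e6 0, e6 4] * (x 0 * y 4 - x 4 * y 0 - x 1 * y 3 + x 3 * y 1)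
    + β ![e6 0, e6 5] * (x 0 * y 5 - x 5 * y 0 - x 2 * y 3 + x 3 * y 2)
    + β ![e6 1, e6 5] * (x 1 * y 5 - x 5 * y 1 - x 2 * y 4 + x 4 * y 2) := by
  have hd0 : β ![e6 0, e6 0] = 0 := β.map_eq_zero_of_eq _ (show (![e6 0, e6 0] : Fin 2 → V6) 0 = ![e6 0, e6 0] 1 from rfl) (by decide)
  have hd1 : β ![e6 1, e6 1] = 0 := β.map_eq_zero_of_eq _ (show (![e6 1, e6 1] : Fin 2 → V6) 0 = ![e6 1, e6 1] 1 from rfl) (by decide)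
  have hd2 : β ![e6 2, e6 2] = 0 := β.map_eq_zero_of_eq _ (show (![e6 2, e6 2] : Fin 2 → V6) 0 = ![e6 2, e6 2] 1 from rfl) (by decide)
  have hd3 : β ![e6 3, e6 3] = 0 := β.map_eq_zero_of_eq _ (show (![e6 3, e6 3] : Fin 2 → V6) 0 = ![e6 3, e6 3] 1 from rfl) (by decide)
  have hd4 : β ![e6 4, e6 4] = 0 := β.map_eq_zero_of_eq _ (show (![e6 4, e6 4] : Fin 2 → V6) 0 = ![e6 4, e6 4] 1 from rfl) (by decide)
  have hd5 : β ![e6 5, e6 5] = 0 := β.map_eq_zero_of_eq _ (show (![e6 5, e6 5] : Fin 2 → V6) 0 = ![e6 5, e6 5] 1 from rfl) (by decide)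
  have hu03 : β ![e6 0, e6 3] = 0 := by
    have t := hβ (e6 0) (e6 3)
    rw [I6_e0, I6_e3, negR] at t
    have s := hswap β (e6 0) (e6 3)
    linarith
  have hu14 : β ![e6 1, e6 4] = 0 := by
    have t := hβ (e6 1) (e6 4)
    rw [I6_e1, I6_e4, negR] at t
    have s := hswap β (e6 1) (e6 4)
    linarith
  have hu25 : β ![e6 2, e6 5] = 0 := by
    have t := hβ (e6 2) (e6 5)
    rw [I6_e2, I6_e5, negR] at t
    have s := hswap β (e6 2) (e6 5)
    linarith
  have hu13 : β ![e6 1, e6 3] = -β ![e6 0, e6 4] := by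
    have t := hβ (e6 1) (e6 3)
    rw [I6_e1, I6_e3, negR] at t
    have s := hswap β (e6 0) (e6 4)
    linarith
  have hu23 : β ![e6 2, e6 3] = -β ![e6 0, e6 5] := by
    have t := hβ (e6 2) (e6 3)
    rw [I6_e2, I6_e3, negR] at t
    have s := hswap β (e6 0) (e6 5)
    linarith
  have hu24 : β ![e6 2, e6 4] = -β ![e6 1, e6 5] := by
    have t := hβ (e6 2) (e6 4)
    rw [I6_e2, I6_e4, negR] at t
    have s := hswap β (e6 1) (e6 5)
    linarith
  have hu34 : β ![e6 3, e6 4] = -β ![e6 0, e6 1] := by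
    have t := hβ (e6 0) (e6 1)
    rw [I6_e0, I6_e1] at t
    linarith
  have hu35 : β ![e6 3, e6 5] = -β ![e6 0, e6 2] := by
    have t := hβ (e6 0) (e6 2)
    rw [I6_e0, I6_e2] at t
    linarith
  have hu45 : β ![e6 4, e6 5] = -β ![e6 1, e6 2] := by
    have t := hβ (e6 1) (e6 2)
    rw [I6_e1, I6_e2] at t
    linarith
  have hl10 : β ![e6 1, e6 0] = -β ![e6 0, e6 1] := by
    rw [hswap β (e6 0) (e6 1)]
    try ring
  have hl20 : β ![e6 2, e6 0] = -β ![e6 0, e6 2] := by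
    rw [hswap β (e6 0) (e6 2)]
    try ring
  have hl30 : β ![e6 3, e6 0] = 0 := by
    rw [hswap β (e6 0) (e6 3)]
    rw [hu03]
    try ring
  have hl40 : β ![e6 4, e6 0] = -β ![e6 0, e6 4] := by
    rw [hswap β (e6 0) (e6 4)]
    try ring
  have hl50 : β ![e6 5, e6 0] = -β ![e6 0, e6 5] := by
    rw [hswap β (e6 0) (e6 5)]
    try ring
  have hl21 : β ![e6 2, e6 1] = -β ![e6 1, e6 2] := by
    rw [hswap β (e6 1) (e6 2)]
    try ring
  have hl31 : β ![e6 3, e6 1] = β ![e6 0, e6 4] := by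
    rw [hswap β (e6 1) (e6 3)]
    rw [hu13]
    try ring
  have hl41 : β ![e6 4, e6 1] = 0 := by
    rw [hswap β (e6 1) (e6 4)]
    rw [hu14]
    try ring
  have hl51 : β ![e6 5, e6 1] = -β ![e6 1, e6 5] := by
    rw [hswap β (e6 1) (e6 5)]
    try ring
  have hl32 : β ![e6 3, e6 2] = β ![e6 0, e6 5] := by
    rw [hswap β (e6 2) (e6 3)]
    rw [hu23]
    try ring
  have hl42 : β ![e6 4, e6 2] = β ![e6 1, e6 5] := by
    rw [hswap β (e6 2) (e6 4)]
    rw [hu24]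
    try ring
  have hl52 : β ![e6 5, e6 2] = 0 := by
    rw [hswap β (e6 2) (e6 5)]
    rw [hu25]
    try ring
  have hl43 : β ![e6 4, e6 3] = β ![e6 0, e6 1] := by
    rw [hswap β (e6 3) (e6 4)]
    rw [hu34]
    try ring
  have hl53 : β ![e6 5, e6 3] = β ![e6 0, e6 2] := by
    rw [hswap β (e6 3) (e6 5)]
    rw [hu35]
    try ring
  have hl54 : β ![e6 5, e6 4] = β ![e6 1, e6 2] := by
    rw [hswap β (e6 4) (e6 5)]
    rw [hu45]
    try ring
  rw [expand2 β x y]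
  simp only [Fin.sum_univ_six]
  rw [hd0, hd1, hd2, hd3, hd4, hd5, hu03, hu14, hu25, hu13, hu23, hu24, hu34, hu35, hu45, hl10, hl20, hl30, hl40, hl50, hl21, hl31, hl41, hl51, hl32, hl42, hl52, hl43, hl53, hl54]
  ring
lemma psm0 (y z : V6) : ψm (e6 0) y z = (y 1 * z 5 - y 5 * z 1) - (y 2 * z 4 - y 4 * z 2) := by
  simp [ψm, w3, E, e6]; ring

lemma psm1 (y z : V6) : ψm (e6 1) y z = -(y 0 * z 5 - y 5 * z 0) + (y 2 * z 3 - y 3 * z 2) := by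
  simp [ψm, w3, E, e6]; ring

lemma psm2 (y z : V6) : ψm (e6 2) y z = (y 0 * z 4 - y 4 * z 0) - (y 1 * z 3 - y 3 * z 1) := by
  simp [ψm, w3, E, e6]; ring

lemma psm3 (y z : V6) : ψm (e6 3) y z = (y 1 * z 2 - y 2 * z 1) - (y 4 * z 5 - y 5 * z 4) := by
  simp [ψm, w3, E, e6]; ring

lemma psm4 (y z : V6) : ψm (e6 4) y z = -(y 0 * z 2 - y 2 * z 0) + (y 3 * z 5 - y 5 * z 3) := by
  simp [ψm, w3, E, e6]; ring

lemma psm5 (y z : V6) : ψm (e6 5) y z = (y 0 * z 1 - y 1 * z 0) - (y 3 * z 4 - y 4 * z 3) := by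
  simp [ψm, w3, E, e6]; ring

lemma psp0 (y z : V6) : ψp (e6 0) y z = (y 1 * z 2 - y 2 * z 1) - (y 4 * z 5 - y 5 * z 4) := by
  simp [ψp, w3, E, e6]; ring

lemma psp1 (y z : V6) : ψp (e6 1) y z = -(y 0 * z 2 - y 2 * z 0) + (y 3 * z 5 - y 5 * z 3) := by
  simp [ψp, w3, E, e6]; ring

lemma psp2 (y z : V6) : ψp (e6 2) y z = (y 0 * z 1 - y 1 * z 0) - (y 3 * z 4 - y 4 * z 3) := by
  simp [ψp, w3, E, e6]; ring

lemma psp3 (y z : V6) : ψp (e6 3) y z = -(y 1 * z 5 - y 5 * z 1) + (y 2 * z 4 - y 4 * z 2) := by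
  simp [ψp, w3, E, e6]; ring

lemma psp4 (y z : V6) : ψp (e6 4) y z = (y 0 * z 5 - y 5 * z 0) - (y 2 * z 3 - y 3 * z 2) := by
  simp [ψp, w3, E, e6]; ring

lemma psp5 (y z : V6) : ψp (e6 5) y z = -(y 0 * z 4 - y 4 * z 0) + (y 1 * z 3 - y 3 * z 1) := by
  simp [ψp, w3, E, e6]; ring

/-- The 1-form associated to `Ξ₊ β`. -/
def muP (β : AlternatingMap ℝ V6 ℝ (Fin 2)) : V6 → ℝ := fun v =>
  -β ![e6 1, e6 2] * v 0 + β ![e6 0, e6 2] * v 1 - β ![e6 0, e6 1] * v 2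
    + β ![e6 1, e6 5] * v 3 - β ![e6 0, e6 5] * v 4 + β ![e6 0, e6 4] * v 5

/-- The 1-form associated to `Ξ₋ β`. -/
def muM (β : AlternatingMap ℝ V6 ℝ (Fin 2)) : V6 → ℝ := fun v =>
  -β ![e6 1, e6 5] * v 0 + β ![e6 0, e6 5] * v 1 - β ![e6 0, e6 4] * v 2
    - β ![e6 1, e6 2] * v 3 + β ![e6 0, e6 2] * v 4 - β ![e6 0, e6 1] * v 5

lemma masterP (β : AlternatingMap ℝ V6 ℝ (Fin 2)) (hβ : β ∈ u3perp) (x y z : V6) :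
    Ξp β x y z = muP β x * ω6 y z - muP β y * ω6 x z + muP β z * ω6 x y := by
  have r0x : β ![e6 0, x] = β ![e6 0, e6 1] * x 1 + β ![e6 0, e6 2] * x 2 + β ![e6 0, e6 4] * x 4 + β ![e6 0, e6 5] * x 5 := by
    rw [u3perp_expand β hβ (e6 0) x]
    simp [e6]
    try ring
  have r0y : β ![e6 0, y] = β ![e6 0, e6 1] * y 1 + β ![e6 0, e6 2] * y 2 + β ![e6 0, e6 4] * y 4 + β ![e6 0, e6 5] * y 5 := by
    rw [u3perp_expand β hβ (e6 0) y]
    simp [e6]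
    try ring
  have r0z : β ![e6 0, z] = β ![e6 0, e6 1] * z 1 + β ![e6 0, e6 2] * z 2 + β ![e6 0, e6 4] * z 4 + β ![e6 0, e6 5] * z 5 := by
    rw [u3perp_expand β hβ (e6 0) z]
    simp [e6]
    try ring
  have r1x : β ![e6 1, x] = -β ![e6 0, e6 1] * x 0 + β ![e6 1, e6 2] * x 2 - β ![e6 0, e6 4] * x 3 + β ![e6 1, e6 5] * x 5 := by
    rw [u3perp_expand β hβ (e6 1) x]
    simp [e6]
    try ring
  have r1y : β ![e6 1, y] = -β ![e6 0, e6 1] * y 0 + β ![e6 1, e6 2] * y 2 - β ![e6 0, e6 4] * y 3 + β ![e6 1, e6 5] * y 5 := by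
    rw [u3perp_expand β hβ (e6 1) y]
    simp [e6]
    try ring
  have r1z : β ![e6 1, z] = -β ![e6 0, e6 1] * z 0 + β ![e6 1, e6 2] * z 2 - β ![e6 0, e6 4] * z 3 + β ![e6 1, e6 5] * z 5 := by
    rw [u3perp_expand β hβ (e6 1) z]
    simp [e6]
    try ring
  have r2x : β ![e6 2, x] = -β ![e6 0, e6 2] * x 0 - β ![e6 1, e6 2] * x 1 - β ![e6 0, e6 5] * x 3 - β ![e6 1, e6 5] * x 4 := by
    rw [u3perp_expand β hβ (e6 2) x]
    simp [e6]
    try ring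
  have r2y : β ![e6 2, y] = -β ![e6 0, e6 2] * y 0 - β ![e6 1, e6 2] * y 1 - β ![e6 0, e6 5] * y 3 - β ![e6 1, e6 5] * y 4 := by
    rw [u3perp_expand β hβ (e6 2) y]
    simp [e6]
    try ring
  have r2z : β ![e6 2, z] = -β ![e6 0, e6 2] * z 0 - β ![e6 1, e6 2] * z 1 - β ![e6 0, e6 5] * z 3 - β ![e6 1, e6 5] * z 4 := by
    rw [u3perp_expand β hβ (e6 2) z]
    simp [e6]
    try ring
  have r3x : β ![e6 3, x] = β ![e6 0, e6 4] * x 1 + β ![e6 0, e6 5] * x 2 - β ![e6 0, e6 1] * x 4 - β ![e6 0, e6 2] * x 5 := by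
    rw [u3perp_expand β hβ (e6 3) x]
    simp [e6]
    try ring
  have r3y : β ![e6 3, y] = β ![e6 0, e6 4] * y 1 + β ![e6 0, e6 5] * y 2 - β ![e6 0, e6 1] * y 4 - β ![e6 0, e6 2] * y 5 := by
    rw [u3perp_expand β hβ (e6 3) y]
    simp [e6]
    try ring
  have r3z : β ![e6 3, z] = β ![e6 0, e6 4] * z 1 + β ![e6 0, e6 5] * z 2 - β ![e6 0, e6 1] * z 4 - β ![e6 0, e6 2] * z 5 := by
    rw [u3perp_expand β hβ (e6 3) z]
    simp [e6]
    try ring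
  have r4x : β ![e6 4, x] = -β ![e6 0, e6 4] * x 0 + β ![e6 1, e6 5] * x 2 + β ![e6 0, e6 1] * x 3 - β ![e6 1, e6 2] * x 5 := by
    rw [u3perp_expand β hβ (e6 4) x]
    simp [e6]
    try ring
  have r4y : β ![e6 4, y] = -β ![e6 0, e6 4] * y 0 + β ![e6 1, e6 5] * y 2 + β ![e6 0, e6 1] * y 3 - β ![e6 1, e6 2] * y 5 := by
    rw [u3perp_expand β hβ (e6 4) y]
    simp [e6]
    try ring
  have r4z : β ![e6 4, z] = -β ![e6 0, e6 4] * z 0 + β ![e6 1, e6 5] * z 2 + β ![e6 0, e6 1] * z 3 - β ![e6 1, e6 2] * z 5 := by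
    rw [u3perp_expand β hβ (e6 4) z]
    simp [e6]
    try ring
  have r5x : β ![e6 5, x] = -β ![e6 0, e6 5] * x 0 - β ![e6 1, e6 5] * x 1 + β ![e6 0, e6 2] * x 3 + β ![e6 1, e6 2] * x 4 := by
    rw [u3perp_expand β hβ (e6 5) x]
    simp [e6]
    try ring
  have r5y : β ![e6 5, y] = -β ![e6 0, e6 5] * y 0 - β ![e6 1, e6 5] * y 1 + β ![e6 0, e6 2] * y 3 + β ![e6 1, e6 2] * y 4 := by
    rw [u3perp_expand β hβ (e6 5) y]
    simp [e6]
    try ring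
  have r5z : β ![e6 5, z] = -β ![e6 0, e6 5] * z 0 - β ![e6 1, e6 5] * z 1 + β ![e6 0, e6 2] * z 3 + β ![e6 1, e6 2] * z 4 := by
    rw [u3perp_expand β hβ (e6 5) z]
    simp [e6]
    try ring
  simp only [Ξp, Fin.sum_univ_six]
  rw [r0x, r0y, r0z, r1x, r1y, r1z, r2x, r2y, r2z, r3x, r3y, r3z, r4x, r4y, r4z, r5x, r5y, r5z]
  rw [psm0 y z, psm0 x z, psm0 x y, psm1 y z, psm1 x z, psm1 x y, psm2 y z, psm2 x z, psm2 x y, psm3 y z, psm3 x z, psm3 x y, psm4 y z, psm4 x z, psm4 x y, psm5 y z, psm5 x z, psm5 x y]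
  simp only [muP]
  rw [omega_expand y z, omega_expand x z, omega_expand x y]
  ring

lemma masterM (β : AlternatingMap ℝ V6 ℝ (Fin 2)) (hβ : β ∈ u3perp) (x y z : V6) :
    Ξm β x y z = muM β x * ω6 y z - muM β y * ω6 x z + muM β z * ω6 x y := by
  have r0x : β ![e6 0, x] = β ![e6 0, e6 1] * x 1 + β ![e6 0, e6 2] * x 2 + β ![e6 0, e6 4] * x 4 + β ![e6 0, e6 5] * x 5 := by
    rw [u3perp_expand β hβ (e6 0) x]
    simp [e6]
    try ring
  have r0y : β ![e6 0, y] = β ![e6 0, e6 1] * y 1 + β ![e6 0, e6 2] * y 2 + β ![e6 0, e6 4] * y 4 + β ![e6 0, e6 5] * y 5 := by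
    rw [u3perp_expand β hβ (e6 0) y]
    simp [e6]
    try ring
  have r0z : β ![e6 0, z] = β ![e6 0, e6 1] * z 1 + β ![e6 0, e6 2] * z 2 + β ![e6 0, e6 4] * z 4 + β ![e6 0, e6 5] * z 5 := by
    rw [u3perp_expand β hβ (e6 0) z]
    simp [e6]
    try ring
  have r1x : β ![e6 1, x] = -β ![e6 0, e6 1] * x 0 + β ![e6 1, e6 2] * x 2 - β ![e6 0, e6 4] * x 3 + β ![e6 1, e6 5] * x 5 := by
    rw [u3perp_expand β hβ (e6 1) x]
    simp [e6]
    try ring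
  have r1y : β ![e6 1, y] = -β ![e6 0, e6 1] * y 0 + β ![e6 1, e6 2] * y 2 - β ![e6 0, e6 4] * y 3 + β ![e6 1, e6 5] * y 5 := by
    rw [u3perp_expand β hβ (e6 1) y]
    simp [e6]
    try ring
  have r1z : β ![e6 1, z] = -β ![e6 0, e6 1] * z 0 + β ![e6 1, e6 2] * z 2 - β ![e6 0, e6 4] * z 3 + β ![e6 1, e6 5] * z 5 := by
    rw [u3perp_expand β hβ (e6 1) z]
    simp [e6]
    try ring
  have r2x : β ![e6 2, x] = -β ![e6 0, e6 2] * x 0 - β ![e6 1, e6 2] * x 1 - β ![e6 0, e6 5] * x 3 - β ![e6 1, e6 5] * x 4 := by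
    rw [u3perp_expand β hβ (e6 2) x]
    simp [e6]
    try ring
  have r2y : β ![e6 2, y] = -β ![e6 0, e6 2] * y 0 - β ![e6 1, e6 2] * y 1 - β ![e6 0, e6 5] * y 3 - β ![e6 1, e6 5] * y 4 := by
    rw [u3perp_expand β hβ (e6 2) y]
    simp [e6]
    try ring
  have r2z : β ![e6 2, z] = -β ![e6 0, e6 2] * z 0 - β ![e6 1, e6 2] * z 1 - β ![e6 0, e6 5] * z 3 - β ![e6 1, e6 5] * z 4 := by
    rw [u3perp_expand β hβ (e6 2) z]
    simp [e6]
    try ring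
  have r3x : β ![e6 3, x] = β ![e6 0, e6 4] * x 1 + β ![e6 0, e6 5] * x 2 - β ![e6 0, e6 1] * x 4 - β ![e6 0, e6 2] * x 5 := by
    rw [u3perp_expand β hβ (e6 3) x]
    simp [e6]
    try ring
  have r3y : β ![e6 3, y] = β ![e6 0, e6 4] * y 1 + β ![e6 0, e6 5] * y 2 - β ![e6 0, e6 1] * y 4 - β ![e6 0, e6 2] * y 5 := by
    rw [u3perp_expand β hβ (e6 3) y]
    simp [e6]
    try ring
  have r3z : β ![e6 3, z] = β ![e6 0, e6 4] * z 1 + β ![e6 0, e6 5] * z 2 - β ![e6 0, e6 1] * z 4 - β ![e6 0, e6 2] * z 5 := by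
    rw [u3perp_expand β hβ (e6 3) z]
    simp [e6]
    try ring
  have r4x : β ![e6 4, x] = -β ![e6 0, e6 4] * x 0 + β ![e6 1, e6 5] * x 2 + β ![e6 0, e6 1] * x 3 - β ![e6 1, e6 2] * x 5 := by
    rw [u3perp_expand β hβ (e6 4) x]
    simp [e6]
    try ring
  have r4y : β ![e6 4, y] = -β ![e6 0, e6 4] * y 0 + β ![e6 1, e6 5] * y 2 + β ![e6 0, e6 1] * y 3 - β ![e6 1, e6 2] * y 5 := by
    rw [u3perp_expand β hβ (e6 4) y]
    simp [e6]
    try ring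
  have r4z : β ![e6 4, z] = -β ![e6 0, e6 4] * z 0 + β ![e6 1, e6 5] * z 2 + β ![e6 0, e6 1] * z 3 - β ![e6 1, e6 2] * z 5 := by
    rw [u3perp_expand β hβ (e6 4) z]
    simp [e6]
    try ring
  have r5x : β ![e6 5, x] = -β ![e6 0, e6 5] * x 0 - β ![e6 1, e6 5] * x 1 + β ![e6 0, e6 2] * x 3 + β ![e6 1, e6 2] * x 4 := by
    rw [u3perp_expand β hβ (e6 5) x]
    simp [e6]
    try ring
  have r5y : β ![e6 5, y] = -β ![e6 0, e6 5] * y 0 - β ![e6 1, e6 5] * y 1 + β ![e6 0, e6 2] * y 3 + β ![e6 1, e6 2] * y 4 := by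
    rw [u3perp_expand β hβ (e6 5) y]
    simp [e6]
    try ring
  have r5z : β ![e6 5, z] = -β ![e6 0, e6 5] * z 0 - β ![e6 1, e6 5] * z 1 + β ![e6 0, e6 2] * z 3 + β ![e6 1, e6 2] * z 4 := by
    rw [u3perp_expand β hβ (e6 5) z]
    simp [e6]
    try ring
  simp only [Ξm, Fin.sum_univ_six]
  rw [r0x, r0y, r0z, r1x, r1y, r1z, r2x, r2y, r2z, r3x, r3y, r3z, r4x, r4y, r4z, r5x, r5y, r5z]
  rw [psp0 y z, psp0 x z, psp0 x y, psp1 y z, psp1 x z, psp1 x y, psp2 y z, psp2 x z, psp2 x y, psp3 y z, psp3 x z, psp3 x y, psp4 y z, psp4 x z, psp4 x y, psp5 y z, psp5 x z, psp5 x y]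
  simp only [muM]
  rw [omega_expand y z, omega_expand x z, omega_expand x y]
  ring

def skewSum (M : Fin 6 → Fin 6 → ℝ) (u w : V6) : ℝ := ∑ i, ∑ j, M i j * u i * w j

lemma skewSum_diag (M : Fin 6 → Fin 6 → ℝ) (hM : ∀ i j, M j i = -M i j) (x : V6) :
    skewSum M x x = 0 := by
  have A : skewSum M x x = ∑ j : Fin 6, ∑ i : Fin 6, M i j * x i * x j := Finset.sum_comm
  have B : (∑ j : Fin 6, ∑ i : Fin 6, M i j * x i * x j)
      = ∑ j : Fin 6, ∑ i : Fin 6, -(M j i * x j * x i) :=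
    Finset.sum_congr rfl fun j _ => Finset.sum_congr rfl fun i _ => by rw [hM j i]; ring
  have C : (∑ j : Fin 6, ∑ i : Fin 6, -(M j i * x j * x i))
      = -(∑ j : Fin 6, ∑ i : Fin 6, M j i * x j * x i) := by simp
  have D : (∑ j : Fin 6, ∑ i : Fin 6, M j i * x j * x i) = skewSum M x x := rfl
  rw [D] at C
  linarith [A.trans (B.trans C)]

def skew2 (M : Fin 6 → Fin 6 → ℝ) (hM : ∀ i j, M j i = -M i j) :
    AlternatingMap ℝ V6 ℝ (Fin 2) where
  toFun v := skewSum M (v 0) (v 1)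
  map_update_add' v k x y := by
    fin_cases k <;>
    · dsimp only
      simp only [Function.update_apply, Pi.add_apply, skewSum]
      rw [← Finset.sum_add_distrib]
      refine Finset.sum_congr rfl fun i _ => ?_
      rw [← Finset.sum_add_distrib]
      refine Finset.sum_congr rfl fun j _ => ?_
      simp; ring
  map_update_smul' v k c x := by
    fin_cases k <;>
    · dsimp only
      simp only [Function.update_apply, Pi.smul_apply, smul_eq_mul, skewSum]
      rw [Finset.mul_sum]
      refine Finset.sum_congr rfl fun i _ => ?_
      rw [Finset.mul_sum]
      refine Finset.sum_congr rfl fun j _ => ?_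
      simp; ring
  map_eq_zero_of_eq' v i j h hij := by
    fin_cases i <;> fin_cases j
    · exact absurd rfl hij
    · show skewSum M (v 0) (v 1) = 0
      rw [show v 0 = v 1 from h]; exact skewSum_diag M hM _
    · show skewSum M (v 0) (v 1) = 0
      rw [show v 0 = v 1 from h.symm]; exact skewSum_diag M hM _
    · exact absurd rfl hij

lemma skew2_apply (M : Fin 6 → Fin 6 → ℝ) (hM) (u w : V6) :
    skew2 M hM ![u, w] = ∑ i, ∑ j, M i j * u i * w j := rfl


def δ6 (i k : Fin 6) : ℝ := if i = k then 1 else 0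

def M6 (p01 p02 p12 q04 q05 q15 : ℝ) (i j : Fin 6) : ℝ :=
    p01 * (δ6 i 0 * δ6 j 1 - δ6 i 1 * δ6 j 0 - δ6 i 3 * δ6 j 4 + δ6 i 4 * δ6 j 3)
  + p02 * (δ6 i 0 * δ6 j 2 - δ6 i 2 * δ6 j 0 - δ6 i 3 * δ6 j 5 + δ6 i 5 * δ6 j 3)
  + p12 * (δ6 i 1 * δ6 j 2 - δ6 i 2 * δ6 j 1 - δ6 i 4 * δ6 j 5 + δ6 i 5 * δ6 j 4)
  + q04 * (δ6 i 0 * δ6 j 4 - δ6 i 4 * δ6 j 0 - δ6 i 1 * δ6 j 3 + δ6 i 3 * δ6 j 1)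
  + q05 * (δ6 i 0 * δ6 j 5 - δ6 i 5 * δ6 j 0 - δ6 i 2 * δ6 j 3 + δ6 i 3 * δ6 j 2)
  + q15 * (δ6 i 1 * δ6 j 5 - δ6 i 5 * δ6 j 1 - δ6 i 2 * δ6 j 4 + δ6 i 4 * δ6 j 2)

lemma M6_skew (p01 p02 p12 q04 q05 q15 : ℝ) :
    ∀ i j, M6 p01 p02 p12 q04 q05 q15 j i = -M6 p01 p02 p12 q04 q05 q15 i j := by
  intro i j; simp only [M6]; ring

lemma M6_pair (p01 p02 p12 q04 q05 q15 : ℝ) (u w : V6) :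
    skew2 (M6 p01 p02 p12 q04 q05 q15) (M6_skew p01 p02 p12 q04 q05 q15) ![u, w] =
      p01 * (u 0 * w 1 - u 1 * w 0 - u 3 * w 4 + u 4 * w 3)
    + p02 * (u 0 * w 2 - u 2 * w 0 - u 3 * w 5 + u 5 * w 3)
    + p12 * (u 1 * w 2 - u 2 * w 1 - u 4 * w 5 + u 5 * w 4)
    + q04 * (u 0 * w 4 - u 4 * w 0 - u 1 * w 3 + u 3 * w 1)
    + q05 * (u 0 * w 5 - u 5 * w 0 - u 2 * w 3 + u 3 * w 2)
    + q15 * (u 1 * w 5 - u 5 * w 1 - u 2 * w 4 + u 4 * w 2) := by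
  rw [skew2_apply]
  simp [Fin.sum_univ_six, M6, δ6]
  ring

lemma M6_mem (p01 p02 p12 q04 q05 q15 : ℝ) :
    skew2 (M6 p01 p02 p12 q04 q05 q15) (M6_skew p01 p02 p12 q04 q05 q15) ∈ u3perp := by
  intro x y
  rw [M6_pair, M6_pair]
  simp only [I6_app0, I6_app1, I6_app2, I6_app3, I6_app4, I6_app5]
  ring

lemma M6_val_01 (p01 p02 p12 q04 q05 q15 : ℝ) :
    skew2 (M6 p01 p02 p12 q04 q05 q15) (M6_skew p01 p02 p12 q04 q05 q15) ![e6 0, e6 1] = p01 := by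
  rw [M6_pair]
  simp [e6]

lemma M6_val_02 (p01 p02 p12 q04 q05 q15 : ℝ) :
    skew2 (M6 p01 p02 p12 q04 q05 q15) (M6_skew p01 p02 p12 q04 q05 q15) ![e6 0, e6 2] = p02 := by
  rw [M6_pair]
  simp [e6]

lemma M6_val_12 (p01 p02 p12 q04 q05 q15 : ℝ) :
    skew2 (M6 p01 p02 p12 q04 q05 q15) (M6_skew p01 p02 p12 q04 q05 q15) ![e6 1, e6 2] = p12 := by
  rw [M6_pair]
  simp [e6]

lemma M6_val_04 (p01 p02 p12 q04 q05 q15 : ℝ) :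
    skew2 (M6 p01 p02 p12 q04 q05 q15) (M6_skew p01 p02 p12 q04 q05 q15) ![e6 0, e6 4] = q04 := by
  rw [M6_pair]
  simp [e6]

lemma M6_val_05 (p01 p02 p12 q04 q05 q15 : ℝ) :
    skew2 (M6 p01 p02 p12 q04 q05 q15) (M6_skew p01 p02 p12 q04 q05 q15) ![e6 0, e6 5] = q05 := by
  rw [M6_pair]
  simp [e6]

lemma M6_val_15 (p01 p02 p12 q04 q05 q15 : ℝ) :
    skew2 (M6 p01 p02 p12 q04 q05 q15) (M6_skew p01 p02 p12 q04 q05 q15) ![e6 1, e6 5] = q15 := by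
  rw [M6_pair]
  simp [e6]

def muPlin (β : AlternatingMap ℝ V6 ℝ (Fin 2)) : V6 →ₗ[ℝ] ℝ :=
    (-β ![e6 1, e6 2]) • (LinearMap.proj 0 : V6 →ₗ[ℝ] ℝ)
  + (β ![e6 0, e6 2]) • (LinearMap.proj 1 : V6 →ₗ[ℝ] ℝ)
  + (-β ![e6 0, e6 1]) • (LinearMap.proj 2 : V6 →ₗ[ℝ] ℝ)
  + (β ![e6 1, e6 5]) • (LinearMap.proj 3 : V6 →ₗ[ℝ] ℝ)
  + (-β ![e6 0, e6 5]) • (LinearMap.proj 4 : V6 →ₗ[ℝ] ℝ)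
  + (β ![e6 0, e6 4]) • (LinearMap.proj 5 : V6 →ₗ[ℝ] ℝ)

lemma muPlin_apply (β : AlternatingMap ℝ V6 ℝ (Fin 2)) (v : V6) : muPlin β v = muP β v := by
  simp [muPlin, muP, LinearMap.proj_apply]; ring

def muMlin (β : AlternatingMap ℝ V6 ℝ (Fin 2)) : V6 →ₗ[ℝ] ℝ :=
    (-β ![e6 1, e6 5]) • (LinearMap.proj 0 : V6 →ₗ[ℝ] ℝ)
  + (β ![e6 0, e6 5]) • (LinearMap.proj 1 : V6 →ₗ[ℝ] ℝ)
  + (-β ![e6 0, e6 4]) • (LinearMap.proj 2 : V6 →ₗ[ℝ] ℝ)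
  + (-β ![e6 1, e6 2]) • (LinearMap.proj 3 : V6 →ₗ[ℝ] ℝ)
  + (β ![e6 0, e6 2]) • (LinearMap.proj 4 : V6 →ₗ[ℝ] ℝ)
  + (-β ![e6 0, e6 1]) • (LinearMap.proj 5 : V6 →ₗ[ℝ] ℝ)

lemma muMlin_apply (β : AlternatingMap ℝ V6 ℝ (Fin 2)) (v : V6) : muMlin β v = muM β v := by
  simp [muMlin, muM, LinearMap.proj_apply]; ring

lemma Ξp_sub (β β' : AlternatingMap ℝ V6 ℝ (Fin 2)) (x y z : V6) :
    Ξp (β - β') x y z = Ξp β x y z - Ξp β' x y z := by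
  simp only [Ξp, AlternatingMap.sub_apply]
  rw [← mul_sub, ← Finset.sum_sub_distrib]
  congr 1
  refine Finset.sum_congr rfl fun i _ => ?_
  ring

lemma Ξm_sub (β β' : AlternatingMap ℝ V6 ℝ (Fin 2)) (x y z : V6) :
    Ξm (β - β') x y z = Ξm β x y z - Ξm β' x y z := by
  simp only [Ξm, AlternatingMap.sub_apply]
  rw [← mul_sub, ← Finset.sum_sub_distrib]
  congr 1
  refine Finset.sum_congr rfl fun i _ => ?_
  ring

lemma sub_mem_u3perp {β β' : AlternatingMap ℝ V6 ℝ (Fin 2)}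
    (hβ : β ∈ u3perp) (hβ' : β' ∈ u3perp) : β - β' ∈ u3perp := by
  intro x y
  rw [AlternatingMap.sub_apply, AlternatingMap.sub_apply, hβ x y, hβ' x y]
  ring

lemma eq_zero_of_gens (β : AlternatingMap ℝ V6 ℝ (Fin 2)) (hβ : β ∈ u3perp)
    (g1 : β ![e6 0, e6 1] = 0) (g2 : β ![e6 0, e6 2] = 0) (g3 : β ![e6 1, e6 2] = 0)
    (g4 : β ![e6 0, e6 4] = 0) (g5 : β ![e6 0, e6 5] = 0) (g6 : β ![e6 1, e6 5] = 0) :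
    β = 0 := by
  apply AlternatingMap.ext
  intro v
  have hv : v = ![v 0, v 1] := by funext k; fin_cases k <;> rfl
  rw [hv]
  rw [u3perp_expand β hβ (v 0) (v 1), g1, g2, g3, g4, g5, g6]
  simp

/-- `Ξ₊` and `Ξ₋` are injective on `u(3)^⊥` and map it onto `{μ ∧ ω}`. -/
theorem Xi_injective_image :
    Set.InjOn Ξp u3perp ∧ Set.InjOn Ξm u3perp ∧
    Ξp '' u3perp = oneFormWedgeOmega ∧ Ξm '' u3perp = oneFormWedgeOmega := by
  have injp : Set.InjOn Ξp u3perp := by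
    intro β hβ β' hβ' h
    have hδ : β - β' ∈ u3perp := sub_mem_u3perp hβ hβ'
    have hz : ∀ x y z : V6, Ξp (β - β') x y z = 0 := by
      intro x y z; rw [Ξp_sub, h]; ring
    have t1 := masterP (β - β') hδ (e6 0) (e6 1) (e6 4)
    rw [hz] at t1
    have t2 := masterP (β - β') hδ (e6 1) (e6 2) (e6 5)
    rw [hz] at t2
    have t3 := masterP (β - β') hδ (e6 2) (e6 0) (e6 3)
    rw [hz] at t3
    have t4 := masterP (β - β') hδ (e6 3) (e6 1) (e6 4)
    rw [hz] at t4
    have t5 := masterP (β - β') hδ (e6 4) (e6 2) (e6 5)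
    rw [hz] at t5
    have t6 := masterP (β - β') hδ (e6 5) (e6 0) (e6 3)
    rw [hz] at t6
    simp [muP, e6, omega_expand, AlternatingMap.sub_apply] at t1 t2 t3 t4 t5 t6
    have hg : β - β' = 0 := by
      apply eq_zero_of_gens _ hδ <;> simp only [AlternatingMap.sub_apply] <;> linarith
    exact sub_eq_zero.mp hg
  have injm : Set.InjOn Ξm u3perp := by
    intro β hβ β' hβ' h
    have hδ : β - β' ∈ u3perp := sub_mem_u3perp hβ hβ'
    have hz : ∀ x y z : V6, Ξm (β - β') x y z = 0 := by
      intro x y z; rw [Ξm_sub, h]; ring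
    have t1 := masterM (β - β') hδ (e6 0) (e6 1) (e6 4)
    rw [hz] at t1
    have t2 := masterM (β - β') hδ (e6 1) (e6 2) (e6 5)
    rw [hz] at t2
    have t3 := masterM (β - β') hδ (e6 2) (e6 0) (e6 3)
    rw [hz] at t3
    have t4 := masterM (β - β') hδ (e6 3) (e6 1) (e6 4)
    rw [hz] at t4
    have t5 := masterM (β - β') hδ (e6 4) (e6 2) (e6 5)
    rw [hz] at t5
    have t6 := masterM (β - β') hδ (e6 5) (e6 0) (e6 3)
    rw [hz] at t6
    simp [muM, e6, omega_expand, AlternatingMap.sub_apply] at t1 t2 t3 t4 t5 t6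
    have hg : β - β' = 0 := by
      apply eq_zero_of_gens _ hδ <;> simp only [AlternatingMap.sub_apply] <;> linarith
    exact sub_eq_zero.mp hg
  have imgp : Ξp '' u3perp = oneFormWedgeOmega := by
    apply Set.Subset.antisymm
    · rintro γ ⟨β, hβ, rfl⟩
      refine ⟨muPlin β, ?_⟩
      funext x y z
      show Ξp β x y z = muPlin β x * ω6 y z - muPlin β y * ω6 x z + muPlin β z * ω6 x y
      rw [masterP β hβ x y z, muPlin_apply, muPlin_apply, muPlin_apply]
    · rintro γ ⟨μ, rfl⟩
      refine ⟨skew2 (M6 (-μ (e6 2)) (μ (e6 1)) (-μ (e6 0)) (μ (e6 5)) (-μ (e6 4)) (μ (e6 3))) (M6_skew (-μ (e6 2)) (μ (e6 1)) (-μ (e6 0)) (μ (e6 5)) (-μ (e6 4)) (μ (e6 3))), M6_mem (-μ (e6 2)) (μ (e6 1)) (-μ (e6 0)) (μ (e6 5)) (-μ (e6 4)) (μ (e6 3)), ?_⟩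
      funext x y z
      show Ξp (skew2 (M6 (-μ (e6 2)) (μ (e6 1)) (-μ (e6 0)) (μ (e6 5)) (-μ (e6 4)) (μ (e6 3))) (M6_skew (-μ (e6 2)) (μ (e6 1)) (-μ (e6 0)) (μ (e6 5)) (-μ (e6 4)) (μ (e6 3)))) x y z = μ x * ω6 y z - μ y * ω6 x z + μ z * ω6 x y
      rw [masterP _ (M6_mem (-μ (e6 2)) (μ (e6 1)) (-μ (e6 0)) (μ (e6 5)) (-μ (e6 4)) (μ (e6 3))) x y z]
      rw [linmap_expand μ x, linmap_expand μ y, linmap_expand μ z]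
      simp only [Fin.sum_univ_six, muP, M6_val_01, M6_val_02, M6_val_12, M6_val_04, M6_val_05, M6_val_15]
      ring
  have imgm : Ξm '' u3perp = oneFormWedgeOmega := by
    apply Set.Subset.antisymm
    · rintro γ ⟨β, hβ, rfl⟩
      refine ⟨muMlin β, ?_⟩
      funext x y z
      show Ξm β x y z = muMlin β x * ω6 y z - muMlin β y * ω6 x z + muMlin β z * ω6 x y
      rw [masterM β hβ x y z, muMlin_apply, muMlin_apply, muMlin_apply]
    · rintro γ ⟨μ, rfl⟩
      refine ⟨skew2 (M6 (-μ (e6 5)) (μ (e6 4)) (-μ (e6 3)) (-μ (e6 2)) (μ (e6 1)) (-μ (e6 0))) (M6_skew (-μ (e6 5)) (μ (e6 4)) (-μ (e6 3)) (-μ (e6 2)) (μ (e6 1)) (-μ (e6 0))), M6_mem (-μ (e6 5)) (μ (e6 4)) (-μ (e6 3)) (-μ (e6 2)) (μ (e6 1)) (-μ (e6 0)), ?_⟩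
      funext x y z
      show Ξm (skew2 (M6 (-μ (e6 5)) (μ (e6 4)) (-μ (e6 3)) (-μ (e6 2)) (μ (e6 1)) (-μ (e6 0))) (M6_skew (-μ (e6 5)) (μ (e6 4)) (-μ (e6 3)) (-μ (e6 2)) (μ (e6 1)) (-μ (e6 0)))) x y z = μ x * ω6 y z - μ y * ω6 x z + μ z * ω6 x y
      rw [masterM _ (M6_mem (-μ (e6 5)) (μ (e6 4)) (-μ (e6 3)) (-μ (e6 2)) (μ (e6 1)) (-μ (e6 0))) x y z]
      rw [linmap_expand μ x, linmap_expand μ y, linmap_expand μ z]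
      simp only [Fin.sum_univ_six, muM, M6_val_01, M6_val_02, M6_val_12, M6_val_04, M6_val_05, M6_val_15]
      ring
  exact ⟨injp, injm, imgp, imgm⟩

end
end

section
/- On ℝ⁷ with the standard G₂ 3-form φ, its Hodge dual 4-form ∗φ, and associated cross product P, for all vectors x, y, z, u ∈ ℝ⁷: ⟨P(x,y), P(z,u)⟩ = ⟨x,z⟩⟨y,u⟩ − ⟨x,u⟩⟨y,z⟩ − ∗φ(x,y,z,u); consequently the cyclic sum over (y,z,u) of ⟨P(x,y), P(z,u)⟩ equals −3 ∗φ(x,y,z,u). -/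
open scoped BigOperators

noncomputable section

/-- ℝ⁷ as the space of functions `Fin 7 → ℝ` (indices in ℤ/7ℤ). -/
abbrev V7 : Type := Fin 7 → ℝ

/-- The standard inner product on ℝ⁷. -/
def ip7 (x y : V7) : ℝ := ∑ i, x i * y i

/-- The standard orthonormal basis vector `e_i`. -/
def e7 (i : Fin 7) : V7 := fun j => if j = i then 1 else 0

/-- The G₂ fundamental 3-form `φ = ∑_{i∈ℤ/7} eⁱ ∧ e^{i+1} ∧ e^{i+3}`
(each wedge of covectors in the determinant convention). -/
def φ7 (x y z : V7) : ℝ :=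
  ∑ i : Fin 7,
    (x i * y (i + 1) * z (i + 3) - x i * y (i + 3) * z (i + 1)
      - x (i + 1) * y i * z (i + 3) + x (i + 1) * y (i + 3) * z i
      + x (i + 3) * y i * z (i + 1) - x (i + 3) * y (i + 1) * z i)

/-- The 4-form `∗φ = −∑_{i∈ℤ/7} e^{i+2} ∧ e^{i+4} ∧ e^{i+5} ∧ e^{i+6}`. -/
def sφ7 (x y z u : V7) : ℝ :=
  -∑ i : Fin 7,
    Matrix.det !![x (i + 2), x (i + 4), x (i + 5), x (i + 6);
                  y (i + 2), y (i + 4), y (i + 5), y (i + 6);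
                  z (i + 2), z (i + 4), z (i + 5), z (i + 6);
                  u (i + 2), u (i + 4), u (i + 5), u (i + 6)]

lemma det4 (a b c d e f g h i j k l m n o p : ℝ) :
    Matrix.det !![a,b,c,d; e,f,g,h; i,j,k,l; m,n,o,p]
      = a*(f*(k*p-l*o) - g*(j*p-l*n) + h*(j*o-k*n))
        - b*(e*(k*p-l*o) - g*(i*p-l*m) + h*(i*o-k*m))
        + c*(e*(j*p-l*n) - f*(i*p-l*m) + h*(i*n-j*m))
        - d*(e*(j*o-k*n) - f*(i*o-k*m) + g*(i*n-j*m)) := by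
  simp [Matrix.det_succ_row_zero, Fin.sum_univ_succ]
  simp [Fin.succAbove, Fin.lt_def]
  ring

/-- `⟨P(x,y), P(z,u)⟩ = ⟨x,z⟩⟨y,u⟩ − ⟨x,u⟩⟨y,z⟩ − ∗φ(x,y,z,u)`, and consequently
the cyclic sum over `(y,z,u)` equals `−3 ∗φ(x,y,z,u)`. -/
theorem cross_product_inner (P : V7 → V7 → V7)
    (hP : ∀ x y z : V7, ip7 (P x y) z = φ7 x y z) :
    ∀ x y z u : V7,
      ip7 (P x y) (P z u)
          = ip7 x z * ip7 y u - ip7 x u * ip7 y z - sφ7 x y z u ∧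
      ip7 (P x y) (P z u) + ip7 (P x z) (P u y) + ip7 (P x u) (P y z)
          = -3 * sφ7 x y z u := by
  have hcoord : ∀ (x y : V7) (k : Fin 7), P x y k = φ7 x y (e7 k) := by
    intro x y k
    have h := hP x y (e7 k)
    simpa [ip7, e7, mul_ite, mul_one, mul_zero, Finset.sum_ite_eq'] using h
  have hip : ∀ x y z u : V7,
      ip7 (P x y) (P z u) = ∑ k : Fin 7, φ7 x y (e7 k) * φ7 z u (e7 k) := by
    intro x y z u
    simp [ip7, hcoord]
  have h1 : ∀ x y z u : V7,
      ip7 (P x y) (P z u)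
        = ip7 x z * ip7 y u - ip7 x u * ip7 y z - sφ7 x y z u := by
    intro x y z u
    rw [hip]
    simp only [φ7, e7, ip7, sφ7, Fin.sum_univ_seven, det4,
      Fin.reduceAdd, Fin.reduceEq, reduceIte,
      mul_zero, mul_one, zero_mul, one_mul, add_zero, zero_add, sub_zero, zero_sub, neg_zero]
    ring
  have hsφ : ∀ x y z u : V7, sφ7 x z u y = sφ7 x y z u ∧ sφ7 x u y z = sφ7 x y z u := by
    intro x y z u
    constructor <;>
    · simp only [sφ7, Fin.sum_univ_seven, det4, Fin.reduceAdd]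
      ring
  have hsym : ∀ a b : V7, ip7 a b = ip7 b a := by
    intro a b; simp [ip7, mul_comm]
  intro x y z u
  refine ⟨h1 x y z u, ?_⟩
  rw [h1 x y z u, h1 x z u y, h1 x u y z, (hsφ x y z u).1, (hsφ x y z u).2,
    hsym y u, hsym z u, hsym y z, hsym u y, hsym z y, hsym u z]
  ring
end
end

section
/- On ℝ⁷ with the standard G₂ 3-form φ and its Hodge dual ∗φ, for a linear endomorphism A of ℝ⁷ define the alternating 3-form A·φ by (A·φ)(x,y,z) = φ(Ax,y,z) + φ(x,Ay,z) + φ(x,y,Az). Then the image of the space of skew-symmetric endomorphisms of ℝ⁷ under A ↦ A·φ equals the subspace {x ⌟ ∗φ : x ∈ ℝ⁷} of alternating 3-forms. (This realizes the identification g₂^⊥ = {x ⌟ ∗φ : x ∈ ℝ⁷}.) -/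
open scoped BigOperators

noncomputable section

set_option maxHeartbeats 4000000 in
private theorem det4aux (m : Matrix (Fin 4) (Fin 4) ℝ) :
    m.det =
      m 0 0 * (m 1 1 * (m 2 2 * m 3 3 - m 2 3 * m 3 2) - m 1 2 * (m 2 1 * m 3 3 - m 2 3 * m 3 1) + m 1 3 * (m 2 1 * m 3 2 - m 2 2 * m 3 1))
    - m 0 1 * (m 1 0 * (m 2 2 * m 3 3 - m 2 3 * m 3 2) - m 1 2 * (m 2 0 * m 3 3 - m 2 3 * m 3 0) + m 1 3 * (m 2 0 * m 3 2 - m 2 2 * m 3 0))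
    + m 0 2 * (m 1 0 * (m 2 1 * m 3 3 - m 2 3 * m 3 1) - m 1 1 * (m 2 0 * m 3 3 - m 2 3 * m 3 0) + m 1 3 * (m 2 0 * m 3 1 - m 2 1 * m 3 0))
    - m 0 3 * (m 1 0 * (m 2 1 * m 3 2 - m 2 2 * m 3 1) - m 1 1 * (m 2 0 * m 3 2 - m 2 2 * m 3 0) + m 1 2 * (m 2 0 * m 3 1 - m 2 1 * m 3 0)) := by
  simp [Matrix.det_succ_row_zero, Fin.sum_univ_succ,
    show (Fin.succ 2 : Fin 4) = 3 by decide,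
    show Fin.succAbove (2:Fin 4) 2 = 3 by decide,
    show Fin.succAbove (1:Fin 4) 2 = 3 by decide,
    show Fin.castSucc (2:Fin 3) = 2 by decide,
    show Fin.succAbove (3:Fin 4) 2 = 2 by decide]
  ring

private def ent (A : V7 →ₗ[ℝ] V7) (i j : Fin 7) : ℝ := A (e7 j) i

private theorem apply_entries (A : V7 →ₗ[ℝ] V7) (x : V7) (i : Fin 7) :
    A x i = ∑ j, x j * ent A i j := by
  have hx : x = ∑ j, x j • e7 j := by
    funext k
    simp [e7, Finset.sum_apply]
  conv_lhs => rw [hx, map_sum]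
  simp [ent, Finset.sum_apply]

private theorem skew_entries (A : V7 →ₗ[ℝ] V7)
    (hA : ∀ x y : V7, ip7 (A x) y = -ip7 x (A y)) (i j : Fin 7) :
    ent A i j = - ent A j i := by
  have h := hA (e7 j) (e7 i)
  simpa [ip7, e7, ent, Finset.sum_ite_eq, Finset.sum_ite_eq'] using h

private theorem diag_entries (A : V7 →ₗ[ℝ] V7)
    (hA : ∀ x y : V7, ip7 (A x) y = -ip7 x (A y)) (i : Fin 7) :
    ent A i i = 0 := by
  have h := skew_entries A hA i i
  linarith

private def crossL (v : V7) : V7 →ₗ[ℝ] V7 where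
  toFun x := fun k => (-1/3) * φ7 v x (e7 k)
  map_add' x y := by
    funext k
    simp only [φ7, Fin.sum_univ_seven, Pi.add_apply]
    ring
  map_smul' c x := by
    funext k
    simp only [φ7, Fin.sum_univ_seven, Pi.smul_apply, smul_eq_mul, RingHom.id_apply]
    ring

private theorem crossL_apply (v x : V7) (k : Fin 7) :
    crossL v x k = (-1/3) * φ7 v x (e7 k) := rfl

set_option maxHeartbeats 16000000 in
/-- The image of the skew-symmetric endomorphisms under `A ↦ A·φ` equals
`{x ⌟ ∗φ : x ∈ ℝ⁷}`, where `(A·φ)(x,y,z) = φ(Ax,y,z) + φ(x,Ay,z) + φ(x,y,Az)`. -/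
theorem skew_action_image :
    {g : V7 → V7 → V7 → ℝ | ∃ A : V7 →ₗ[ℝ] V7,
        (∀ x y : V7, ip7 (A x) y = -ip7 x (A y)) ∧
        g = fun x y z => φ7 (A x) y z + φ7 x (A y) z + φ7 x y (A z)} =
      {g : V7 → V7 → V7 → ℝ | ∃ x : V7, g = fun a b c => sφ7 x a b c} := by
  ext g
  simp only [Set.mem_setOf_eq]
  constructor
  · rintro ⟨A, hA, rfl⟩
    refine ⟨fun k : Fin 7 =>
      if k = 0 then ent A 1 3 + ent A 2 6 + ent A 4 5
      else if k = 1 then -ent A 0 3 + ent A 2 4 + ent A 5 6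
      else if k = 2 then -ent A 0 6 - ent A 1 4 + ent A 3 5
      else if k = 3 then ent A 0 1 - ent A 2 5 + ent A 4 6
      else if k = 4 then -ent A 0 5 + ent A 1 2 - ent A 3 6
      else if k = 5 then ent A 0 4 - ent A 1 6 + ent A 2 3
      else ent A 0 2 + ent A 1 5 + ent A 3 4, ?_⟩
    funext x y z
    simp only [φ7, sφ7, det4aux, apply_entries A, Fin.sum_univ_seven]
    simp only [Matrix.of_apply, Matrix.cons_val', Matrix.cons_val_zero, Matrix.cons_val_one, Matrix.cons_val_two, Nat.succ_eq_add_one, Nat.reduceAdd, Matrix.tail_cons, Matrix.head_cons, Matrix.empty_val', Matrix.cons_val_fin_one, Matrix.cons_val_three, Matrix.head_fin_const, Fin.isValue, Fin.reduceAdd, Fin.reduceEq, reduceIte, mul_zero, mul_one, zero_mul, one_mul, add_zero, zero_add, mul_neg, neg_mul, sub_zero, zero_sub, neg_zero, neg_neg, sub_neg_eq_add]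
    simp only [skew_entries A hA 1 0, skew_entries A hA 2 0, skew_entries A hA 2 1, skew_entries A hA 3 0, skew_entries A hA 3 1, skew_entries A hA 3 2, skew_entries A hA 4 0, skew_entries A hA 4 1, skew_entries A hA 4 2, skew_entries A hA 4 3, skew_entries A hA 5 0, skew_entries A hA 5 1, skew_entries A hA 5 2, skew_entries A hA 5 3, skew_entries A hA 5 4, skew_entries A hA 6 0, skew_entries A hA 6 1, skew_entries A hA 6 2, skew_entries A hA 6 3, skew_entries A hA 6 4, skew_entries A hA 6 5, diag_entries A hA 0, diag_entries A hA 1, diag_entries A hA 2, diag_entries A hA 3, diag_entries A hA 4, diag_entries A hA 5, diag_entries A hA 6]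
    ring
  · rintro ⟨v, rfl⟩
    refine ⟨crossL v, ?_, ?_⟩
    · intro x y
      simp only [ip7, crossL_apply, φ7, e7, Fin.sum_univ_seven]
      simp only [Matrix.of_apply, Matrix.cons_val', Matrix.cons_val_zero, Matrix.cons_val_one, Matrix.cons_val_two, Nat.succ_eq_add_one, Nat.reduceAdd, Matrix.tail_cons, Matrix.head_cons, Matrix.empty_val', Matrix.cons_val_fin_one, Matrix.cons_val_three, Matrix.head_fin_const, Fin.isValue, Fin.reduceAdd, Fin.reduceEq, reduceIte, mul_zero, mul_one, zero_mul, one_mul, add_zero, zero_add, mul_neg, neg_mul, sub_zero, zero_sub, neg_zero, neg_neg, sub_neg_eq_add]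
      ring
    · funext x y z
      simp only [φ7, sφ7, det4aux, crossL_apply, e7, Fin.sum_univ_seven]
      simp only [Matrix.of_apply, Matrix.cons_val', Matrix.cons_val_zero, Matrix.cons_val_one, Matrix.cons_val_two, Nat.succ_eq_add_one, Nat.reduceAdd, Matrix.tail_cons, Matrix.head_cons, Matrix.empty_val', Matrix.cons_val_fin_one, Matrix.cons_val_three, Matrix.head_fin_const, Fin.isValue, Fin.reduceAdd, Fin.reduceEq, reduceIte, mul_zero, mul_one, zero_mul, one_mul, add_zero, zero_add, mul_neg, neg_mul, sub_zero, zero_sub, neg_zero, neg_neg, sub_neg_eq_add]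
      ring
end
end

section
/- On ℝ⁷ with the standard G₂ 3-form φ, its Hodge dual 4-form ∗φ, and associated cross product P, let n ∈ ℝ⁷ be a unit vector. Then for all vectors x, y, z orthogonal to n: ∗φ(n, x, y, z) = −φ(P(n,x), y, z). (This says that on the hyperplane n^⊥, the 3-form ι*(n ⌟ ∗φ) is obtained from ι*φ by applying the almost complex structure I = P(n,·) in one argument, i.e. ψ₋ = I_{(1)}ψ₊ for the induced SU(3)-structure.) -/
open scoped BigOperators

noncomputable section

lemma det4_aux (a b c d e f g h i j k l m nn o p : ℝ) :
    Matrix.det !![a, b, c, d; e, f, g, h; i, j, k, l; m, nn, o, p] =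
      a * f * k * p - a * f * l * o - a * g * j * p + a * g * l * nn + a * h * j * o - a * h * k * nn
      - b * e * k * p + b * e * l * o + b * g * i * p - b * g * l * m - b * h * i * o + b * h * k * m
      + c * e * j * p - c * e * l * nn - c * f * i * p + c * f * l * m + c * h * i * nn - c * h * j * m
      - d * e * j * o + d * e * k * nn + d * f * i * o - d * f * k * m - d * g * i * nn + d * g * j * m := by
  simp [Matrix.det_succ_row_zero, Fin.sum_univ_succ, Fin.succAbove,
    Matrix.cons_val_succ, show ((2:Fin 3).castSucc) = (2:Fin 4) from rfl]
  ring

set_option maxHeartbeats 4000000 in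
/-- For a unit vector `n` and `x, y, z ⟂ n`: `∗φ(n,x,y,z) = −φ(P(n,x),y,z)`. -/
theorem star_phi_interior_normal (P : V7 → V7 → V7)
    (hP : ∀ x y z : V7, ip7 (P x y) z = φ7 x y z)
    (n : V7) (hn : ip7 n n = 1) :
    ∀ x y z : V7, ip7 n x = 0 → ip7 n y = 0 → ip7 n z = 0 →
      sφ7 n x y z = -φ7 (P n x) y z := by
  intro x y z hx hy hz
  have key : φ7 (P n x) y z = φ7 n x (fun j => φ7 (e7 j) y z) := by
    rw [← hP n x (fun j => φ7 (e7 j) y z)]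
    generalize P n x = w
    simp only [φ7, ip7, e7, Fin.sum_univ_seven, Fin.reduceAdd, Fin.reduceEq, if_true, if_false,
      reduceIte, one_mul, zero_mul, mul_zero, mul_one, mul_ite, ite_mul]
    ring
  rw [key]
  simp only [ip7, Fin.sum_univ_seven] at hy hz
  simp only [sφ7, φ7, ip7, e7, Fin.sum_univ_seven, Fin.reduceAdd, Fin.reduceEq, if_true, if_false,
    reduceIte, one_mul, zero_mul, mul_zero, mul_one, mul_ite, ite_mul, det4_aux]
  linear_combination
    (x 0 * z 0 + x 1 * z 1 + x 2 * z 2 + x 3 * z 3 + x 4 * z 4 + x 5 * z 5 + x 6 * z 6) * hy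
    - (x 0 * y 0 + x 1 * y 1 + x 2 * y 2 + x 3 * y 3 + x 4 * y 4 + x 5 * y 5 + x 6 * y 6) * hz
end
end
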